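/- arXiv:1602.02546 — 3 statements merged into one kernel-verified Lean document; each statement's English description precedes it below -/
import Mathlib

section
/- Let H₁ and H₂ be complex Hilbert spaces, S a bounded selfadjoint operator on H₁, C : H₁ → H₂ a bounded operator, and J₂ a fundamental symmetry on H₂. Then ν₋(S) ≤ ν₋(S − C*∘J₂∘C) + ν₋(J₂) and ν₊(S) ≤ ν₊(S − C*∘J₂∘C) + ν₊(J₂) in ℕ∪{∞}. -/
open ContinuousLinearMap

noncomputable section

/-- The negative index `ν₋(S)` of a bounded operator on a complex Hilbert space: the
supremum of `dim M` over all subspaces `M` on which the quadratic form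
`x ↦ ⟨Sx, x⟩` is negative definite. -/
noncomputable def negIndex {H : Type*} [NormedAddCommGroup H] [InnerProductSpace ℂ H]
    (S : H →L[ℂ] H) : ℕ∞ :=
  ⨆ M : {M : Submodule ℂ H // ∀ x ∈ M, x ≠ 0 → (inner ℂ (S x) x : ℂ).re < 0},
    (Module.rank ℂ (M : Submodule ℂ H)).toENat

/-- The positive index `ν₊(S)`. -/
noncomputable def posIndex {H : Type*} [NormedAddCommGroup H] [InnerProductSpace ℂ H]
    (S : H →L[ℂ] H) : ℕ∞ :=
  ⨆ M : {M : Submodule ℂ H // ∀ x ∈ M, x ≠ 0 → 0 < (inner ℂ (S x) x : ℂ).re},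
    (Module.rank ℂ (M : Submodule ℂ H)).toENat

/-- The modulus `|C| = (C*C)^{1/2}` of a bounded operator. -/
noncomputable def absOp {H₁ H₂ : Type*} [NormedAddCommGroup H₁] [InnerProductSpace ℂ H₁]
    [NormedAddCommGroup H₂] [InnerProductSpace ℂ H₂] [CompleteSpace H₁] [CompleteSpace H₂]
    (C : H₁ →L[ℂ] H₂) : H₁ →L[ℂ] H₁ :=
  CFC.sqrt (adjoint C ∘L C)

/-- The positive square root `|C|^{1/2}` of the modulus of a bounded operator. -/
noncomputable def sqrtAbs {H₁ H₂ : Type*} [NormedAddCommGroup H₁] [InnerProductSpace ℂ H₁]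
    [NormedAddCommGroup H₂] [InnerProductSpace ℂ H₂] [CompleteSpace H₁] [CompleteSpace H₂]
    (C : H₁ →L[ℂ] H₂) : H₁ →L[ℂ] H₁ :=
  CFC.sqrt (absOp C)

/-- The block operator `[[A₁₁, A₁₂], [A₂₁, A₂₂]]` on the Hilbert direct sum `H₁ ⊕ H₂`
(realized as `WithLp 2 (H₁ × H₂)`). -/
noncomputable def blockOp {H₁ H₂ : Type*} [NormedAddCommGroup H₁] [InnerProductSpace ℂ H₁]
    [NormedAddCommGroup H₂] [InnerProductSpace ℂ H₂]
    (A11 : H₁ →L[ℂ] H₁) (A12 : H₂ →L[ℂ] H₁) (A21 : H₁ →L[ℂ] H₂) (A22 : H₂ →L[ℂ] H₂) :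
    WithLp 2 (H₁ × H₂) →L[ℂ] WithLp 2 (H₁ × H₂) :=
  ((WithLp.prodContinuousLinearEquiv 2 ℂ H₁ H₂).symm : H₁ × H₂ →L[ℂ] WithLp 2 (H₁ × H₂)) ∘L
    ((A11 ∘L fst ℂ H₁ H₂ + A12 ∘L snd ℂ H₁ H₂).prod (A21 ∘L fst ℂ H₁ H₂ + A22 ∘L snd ℂ H₁ H₂)) ∘L
    ((WithLp.prodContinuousLinearEquiv 2 ℂ H₁ H₂) : WithLp 2 (H₁ × H₂) →L[ℂ] H₁ × H₂)

lemma auxkey {H₁ H₂ : Type*} [NormedAddCommGroup H₁] [InnerProductSpace ℂ H₁]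
    [NormedAddCommGroup H₂] [InnerProductSpace ℂ H₂]
    (S T : H₁ →L[ℂ] H₁) (J : H₂ →L[ℂ] H₂) (φ : H₁ →L[ℂ] H₂)
    (h1 : ∀ x : H₁, φ x = 0 → x ≠ 0 → (inner ℂ (S x) x : ℂ).re < 0 → (inner ℂ (T x) x : ℂ).re < 0)
    (h2 : ∀ x : H₁, φ x ≠ 0 → (inner ℂ (J (φ x)) (φ x) : ℂ).re < 0) :
    negIndex S ≤ negIndex T + negIndex J := by
  rw [negIndex]
  refine iSup_le fun ⟨M, hM⟩ => ?_
  set f : M →ₗ[ℂ] H₂ := φ.toLinearMap ∘ₗ M.subtype with hf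
  have hrank : (Module.rank ℂ M).toENat = (Module.rank ℂ (LinearMap.range f)).toENat +
      (Module.rank ℂ (LinearMap.ker f)).toENat := by
    have h := congrArg Cardinal.toENat (LinearMap.lift_rank_range_add_rank_ker f)
    simpa [map_add, Cardinal.toENat_lift] using h.symm
  have hK : ∀ x ∈ (LinearMap.ker f).map M.subtype, x ≠ 0 → (inner ℂ (T x) x : ℂ).re < 0 := by
    rintro x hx hx0
    obtain ⟨⟨y, hyM⟩, hy, rfl⟩ := hx
    have hφ : φ y = 0 := hy
    exact h1 y hφ hx0 (hM y hyM hx0)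
  have hR : ∀ x ∈ LinearMap.range f, x ≠ 0 → (inner ℂ (J x) x : ℂ).re < 0 := by
    rintro x ⟨⟨y, hyM⟩, rfl⟩ hx0
    exact h2 y hx0
  have e1 : (Module.rank ℂ ((LinearMap.ker f).map M.subtype)).toENat ≤ negIndex T := by
    refine le_trans ?_ (le_iSup _ (⟨(LinearMap.ker f).map M.subtype, hK⟩ :
      {M' : Submodule ℂ H₁ // ∀ x ∈ M', x ≠ 0 → (inner ℂ (T x) x : ℂ).re < 0}))
    exact le_rfl
  have e2 : (Module.rank ℂ (LinearMap.range f)).toENat ≤ negIndex J :=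
    le_iSup (fun M' : {M' : Submodule ℂ H₂ // ∀ x ∈ M', x ≠ 0 → (inner ℂ (J x) x : ℂ).re < 0} =>
      (Module.rank ℂ (M' : Submodule ℂ H₂)).toENat) ⟨LinearMap.range f, hR⟩
  have erk : Module.rank ℂ ((LinearMap.ker f).map M.subtype) = Module.rank ℂ (LinearMap.ker f) :=
    ((Submodule.equivMapOfInjective M.subtype M.injective_subtype _).symm).rank_eq
  calc (Module.rank ℂ M).toENat
      = (Module.rank ℂ (LinearMap.range f)).toENat +
        (Module.rank ℂ ((LinearMap.ker f).map M.subtype)).toENat := by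
        rw [erk, ← hrank]
    _ ≤ negIndex J + negIndex T := add_le_add e2 e1
    _ = negIndex T + negIndex J := add_comm _ _

lemma posIndex_eq_negIndex_neg {H : Type*} [NormedAddCommGroup H] [InnerProductSpace ℂ H]
    (S : H →L[ℂ] H) : posIndex S = negIndex (-S) := by
  rw [posIndex, negIndex]
  apply le_antisymm
  · refine iSup_le fun ⟨M, hM⟩ => le_trans ?_ (le_iSup _ (⟨M, fun x hx hx0 => by
      simpa [ContinuousLinearMap.neg_apply, inner_neg_left] using hM x hx hx0⟩ :
      {M' : Submodule ℂ H // ∀ x ∈ M', x ≠ 0 → (inner ℂ ((-S) x) x : ℂ).re < 0}))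
    exact le_rfl
  · refine iSup_le fun ⟨M, hM⟩ => le_trans ?_ (le_iSup _ (⟨M, fun x hx hx0 => by
      have := hM x hx hx0
      simp only [ContinuousLinearMap.neg_apply, inner_neg_left, Complex.neg_re, neg_neg] at this
      linarith⟩ :
      {M' : Submodule ℂ H // ∀ x ∈ M', x ≠ 0 → 0 < (inner ℂ (S x) x : ℂ).re}))
    exact le_rfl

theorem statement_7
    {H₁ H₂ : Type*} [NormedAddCommGroup H₁] [InnerProductSpace ℂ H₁] [CompleteSpace H₁]
    [NormedAddCommGroup H₂] [InnerProductSpace ℂ H₂] [CompleteSpace H₂]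
    (S : H₁ →L[ℂ] H₁) (hS : IsSelfAdjoint S) (C : H₁ →L[ℂ] H₂)
    (J₂ : H₂ →L[ℂ] H₂) (hJ₂sa : IsSelfAdjoint J₂) (hJ₂sq : J₂ ∘L J₂ = 1) :
    negIndex S ≤ negIndex (S - adjoint C ∘L J₂ ∘L C) + negIndex J₂ ∧
    posIndex S ≤ posIndex (S - adjoint C ∘L J₂ ∘L C) + posIndex J₂ := by
  have hJJ : ∀ u : H₂, J₂ (J₂ u) = u := fun u => by
    have := congrArg (fun A : H₂ →L[ℂ] H₂ => A u) hJ₂sq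
    simpa using this
  have hCn : ∀ x : H₁, 0 ≤ (inner ℂ (C x) (C x) : ℂ).re := fun x => by
    simpa using inner_self_nonneg (𝕜 := ℂ) (x := C x)
  have hTre : ∀ x : H₁, (inner ℂ ((S - adjoint C ∘L J₂ ∘L C) x) x : ℂ).re
      = (inner ℂ (S x) x : ℂ).re - (inner ℂ (J₂ (C x)) (C x) : ℂ).re := by
    intro x
    simp [ContinuousLinearMap.sub_apply, ContinuousLinearMap.comp_apply, inner_sub_left,
      ContinuousLinearMap.adjoint_inner_left]
  constructor
  · refine auxkey S (S - adjoint C ∘L J₂ ∘L C) J₂ ((1 - J₂) ∘L C) ?_ ?_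
    · intro x hφ hx0 hSx
      have hJC : J₂ (C x) = C x := by
        have h : C x - J₂ (C x) = 0 := by
          simpa [ContinuousLinearMap.comp_apply, ContinuousLinearMap.sub_apply] using hφ
        exact (sub_eq_zero.mp h).symm
      rw [hTre x, hJC]
      have := hCn x
      linarith
    · intro x hφ
      set y : H₂ := ((1 - J₂) ∘L C) x with hy
      have hJy : J₂ y = -y := by
        simp only [hy, ContinuousLinearMap.comp_apply, ContinuousLinearMap.sub_apply,
          ContinuousLinearMap.one_apply, map_sub, hJJ]
        abel
      rw [hJy, inner_neg_left]
      have hpos : 0 < (inner ℂ y y : ℂ).re := by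
        have h0 : (inner ℂ y y : ℂ).re = ‖y‖ * ‖y‖ := by
          simpa using inner_self_eq_norm_mul_norm (𝕜 := ℂ) y
        have : 0 < ‖y‖ := norm_pos_iff.mpr hφ
        nlinarith
      simp only [Complex.neg_re]
      linarith
  · rw [posIndex_eq_negIndex_neg S, posIndex_eq_negIndex_neg (S - adjoint C ∘L J₂ ∘L C),
      posIndex_eq_negIndex_neg J₂]
    refine auxkey (-S) (-(S - adjoint C ∘L J₂ ∘L C)) (-J₂) ((1 + J₂) ∘L C) ?_ ?_
    · intro x hφ hx0 hSx
      have hJC : J₂ (C x) = -(C x) := by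
        have h : C x + J₂ (C x) = 0 := by
          simpa [ContinuousLinearMap.comp_apply, ContinuousLinearMap.add_apply] using hφ
        exact eq_neg_of_add_eq_zero_left (by rw [add_comm]; exact h)
      have hS' : 0 < (inner ℂ (S x) x : ℂ).re := by
        simpa [ContinuousLinearMap.neg_apply, inner_neg_left] using hSx
      have : (inner ℂ ((-(S - adjoint C ∘L J₂ ∘L C)) x) x : ℂ).re
          = -((inner ℂ (S x) x : ℂ).re - (inner ℂ (J₂ (C x)) (C x) : ℂ).re) := by
        rw [ContinuousLinearMap.neg_apply, inner_neg_left, Complex.neg_re, hTre x]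
      rw [this, hJC, inner_neg_left]
      have := hCn x
      simp only [Complex.neg_re]
      linarith
    · intro x hφ
      set y : H₂ := ((1 + J₂) ∘L C) x with hy
      have hJy : J₂ y = y := by
        simp only [hy, ContinuousLinearMap.comp_apply, ContinuousLinearMap.add_apply,
          ContinuousLinearMap.one_apply, map_add, hJJ]
        abel
      rw [ContinuousLinearMap.neg_apply, hJy, inner_neg_left]
      have hpos : 0 < (inner ℂ y y : ℂ).re := by
        have h0 : (inner ℂ y y : ℂ).re = ‖y‖ * ‖y‖ := by
          simpa using inner_self_eq_norm_mul_norm (𝕜 := ℂ) y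
        have : 0 < ‖y‖ := norm_pos_iff.mpr hφ
        nlinarith
      simp only [Complex.neg_re]
      linarith


end
end

section
/- Let H be a complex Hilbert space, J a fundamental symmetry on H, and T a bounded selfadjoint operator on H. Let M = [[J, T],[T, J]] be the block operator on the Hilbert direct sum H⊕H and let U = (1/√2)·[[I, I],[I, −I]] (a unitary operator on H⊕H). Then |M|^{1/2} = U ∘ diag(|J+T|^{1/2}, |J−T|^{1/2}) ∘ U*. -/
open ContinuousLinearMap

noncomputable section

section helpers

variable {H₁ H₂ : Type*} [NormedAddCommGroup H₁] [InnerProductSpace ℂ H₁]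
    [NormedAddCommGroup H₂] [InnerProductSpace ℂ H₂]

omit [NormedAddCommGroup H₁] [InnerProductSpace ℂ H₁] [NormedAddCommGroup H₂]
  [InnerProductSpace ℂ H₂] in
lemma WithLpProd.ext' {x y : WithLp 2 (H₁ × H₂)} (h1 : x.fst = y.fst) (h2 : x.snd = y.snd) :
    x = y := WithLp.ofLp_injective 2 (Prod.ext h1 h2)

lemma blockOp_apply (A11 : H₁ →L[ℂ] H₁) (A12 : H₂ →L[ℂ] H₁) (A21 : H₁ →L[ℂ] H₂)
    (A22 : H₂ →L[ℂ] H₂) (x : WithLp 2 (H₁ × H₂)) :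
    blockOp A11 A12 A21 A22 x =
      (WithLp.equiv 2 (H₁ × H₂)).symm (A11 x.fst + A12 x.snd, A21 x.fst + A22 x.snd) := rfl

lemma blockOp_fst (A11 : H₁ →L[ℂ] H₁) (A12 : H₂ →L[ℂ] H₁) (A21 : H₁ →L[ℂ] H₂)
    (A22 : H₂ →L[ℂ] H₂) (x : WithLp 2 (H₁ × H₂)) :
    (blockOp A11 A12 A21 A22 x).fst = A11 x.fst + A12 x.snd := rfl

lemma blockOp_snd (A11 : H₁ →L[ℂ] H₁) (A12 : H₂ →L[ℂ] H₁) (A21 : H₁ →L[ℂ] H₂)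
    (A22 : H₂ →L[ℂ] H₂) (x : WithLp 2 (H₁ × H₂)) :
    (blockOp A11 A12 A21 A22 x).snd = A21 x.fst + A22 x.snd := rfl

lemma blockOp_comp (A11 : H₁ →L[ℂ] H₁) (A12 : H₂ →L[ℂ] H₁) (A21 : H₁ →L[ℂ] H₂)
    (A22 : H₂ →L[ℂ] H₂) (B11 : H₁ →L[ℂ] H₁) (B12 : H₂ →L[ℂ] H₁) (B21 : H₁ →L[ℂ] H₂)
    (B22 : H₂ →L[ℂ] H₂) :
    blockOp A11 A12 A21 A22 ∘L blockOp B11 B12 B21 B22 =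
      blockOp (A11 ∘L B11 + A12 ∘L B21) (A11 ∘L B12 + A12 ∘L B22)
        (A21 ∘L B11 + A22 ∘L B21) (A21 ∘L B12 + A22 ∘L B22) := by
  refine ContinuousLinearMap.ext fun x => WithLpProd.ext' ?_ ?_ <;>
    · simp [blockOp_fst, blockOp_snd]; abel

lemma blockOp_one : blockOp (1 : H₁ →L[ℂ] H₁) 0 0 (1 : H₂ →L[ℂ] H₂) = 1 := by
  refine ContinuousLinearMap.ext fun x => WithLpProd.ext' ?_ ?_ <;>
    simp [blockOp_fst, blockOp_snd]

lemma blockOp_smul (c : ℂ) (A11 : H₁ →L[ℂ] H₁) (A12 : H₂ →L[ℂ] H₁) (A21 : H₁ →L[ℂ] H₂)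
    (A22 : H₂ →L[ℂ] H₂) :
    c • blockOp A11 A12 A21 A22 = blockOp (c • A11) (c • A12) (c • A21) (c • A22) := by
  refine ContinuousLinearMap.ext fun x => WithLpProd.ext' ?_ ?_ <;>
    simp [blockOp_fst, blockOp_snd, WithLp.smul_fst, WithLp.smul_snd]

variable [CompleteSpace H₁] [CompleteSpace H₂]

lemma blockOp_adjoint (A11 : H₁ →L[ℂ] H₁) (A12 : H₂ →L[ℂ] H₁) (A21 : H₁ →L[ℂ] H₂)
    (A22 : H₂ →L[ℂ] H₂) :
    adjoint (blockOp A11 A12 A21 A22) =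
      blockOp (adjoint A11) (adjoint A21) (adjoint A12) (adjoint A22) := by
  symm
  rw [eq_adjoint_iff]
  intro x y
  simp only [blockOp_apply, WithLp.prod_inner_apply, blockOp_fst, blockOp_snd,
    inner_add_left, inner_add_right, adjoint_inner_left, WithLp.equiv_symm_apply, WithLp.toLp_fst,
    WithLp.toLp_snd, WithLp.ofLp_fst, WithLp.ofLp_snd]
  ring

lemma blockOp_isPositive {A : H₁ →L[ℂ] H₁} {B : H₂ →L[ℂ] H₂} (hA : A.IsPositive)
    (hB : B.IsPositive) : (blockOp A 0 0 B).IsPositive := by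
  refine isPositive_def'.mpr ⟨?_, ?_⟩
  · rw [IsSelfAdjoint, star_eq_adjoint, blockOp_adjoint,
      hA.isSelfAdjoint.adjoint_eq, hB.isSelfAdjoint.adjoint_eq]
    congr 1 <;> simp
  · intro x
    have h1 := hA.re_inner_nonneg_left x.fst
    have h2 := hB.re_inner_nonneg_left x.snd
    simp only [reApplyInnerSelf, WithLp.prod_inner_apply, blockOp_fst, blockOp_snd,
      ContinuousLinearMap.zero_apply, add_zero, zero_add, map_add, WithLp.ofLp_fst, WithLp.ofLp_snd]
    exact add_nonneg h1 h2

end helpers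

set_option maxHeartbeats 2000000 in
set_option synthInstance.maxHeartbeats 1000000 in
theorem statement_8
    {H : Type*} [NormedAddCommGroup H] [InnerProductSpace ℂ H] [CompleteSpace H]
    (J : H →L[ℂ] H) (hJsa : IsSelfAdjoint J) (hJsq : J ∘L J = 1)
    (T : H →L[ℂ] H) (hT : IsSelfAdjoint T)
    (M : WithLp 2 (H × H) →L[ℂ] WithLp 2 (H × H)) (hM : M = blockOp J T T J)
    (U : WithLp 2 (H × H) →L[ℂ] WithLp 2 (H × H))
    (hU : U = ((Real.sqrt 2 : ℂ))⁻¹ • blockOp (1 : H →L[ℂ] H) 1 1 (-1)) :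
    sqrtAbs M = U ∘L blockOp (sqrtAbs (J + T)) 0 0 (sqrtAbs (J - T)) ∘L adjoint U := by
  set c : ℂ := ((Real.sqrt 2 : ℂ))⁻¹ with hc
  set X : WithLp 2 (H × H) →L[ℂ] WithLp 2 (H × H) := blockOp (1 : H →L[ℂ] H) 1 1 (-1) with hX
  have hcc : c * c = (2 : ℂ)⁻¹ := by
    rw [hc, ← mul_inv, ← Complex.ofReal_mul, Real.mul_self_sqrt (by norm_num)]
    norm_num
  -- adjoint U = U
  have hXadj : adjoint X = X := by
    rw [hX, blockOp_adjoint]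
    congr 1 <;> simp [← star_eq_adjoint]
  have hUadj : adjoint U = U := by
    rw [hU, ← star_eq_adjoint, star_smul, star_eq_adjoint, hXadj]
    congr 1
    rw [hc]
    simp [RCLike.star_def, map_inv₀, Complex.conj_ofReal]
  -- U ∘L U = 1
  have hXX : X ∘L X = (2 : ℂ) • 1 := by
    rw [hX, blockOp_comp, ← blockOp_one, blockOp_smul]
    congr 1 <;> · ext x; simp [two_smul]
  have hUU : U ∘L U = 1 := by
    rw [hU, smul_comp, comp_smul, smul_smul, hcc, hXX, smul_smul]
    norm_num
  have hUaU : adjoint U ∘L U = 1 := by rw [hUadj, hUU]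
  set A : H →L[ℂ] H := J + T with hA
  set B : H →L[ℂ] H := J - T with hB
  have hAsa : IsSelfAdjoint A := hJsa.add hT
  have hBsa : IsSelfAdjoint B := hJsa.sub hT
  -- conjugation by U of a diagonal block
  have hconj : ∀ P Q : H →L[ℂ] H,
      U ∘L blockOp P 0 0 Q ∘L U =
        (2:ℂ)⁻¹ • blockOp (P + Q) (P - Q) (P - Q) (P + Q) := by
    intro P Q
    rw [hU]
    simp only [smul_comp, comp_smul, smul_smul, hcc]
    rw [hX, blockOp_comp, blockOp_comp]
    congr 1
    congr 1 <;> · ext x; simp [sub_eq_add_neg]; try abel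
  -- M = U D₀ U
  have hM' : M = U ∘L blockOp A 0 0 B ∘L U := by
    rw [hconj, hM, blockOp_smul]
    have e1 : A + B = (2:ℂ) • J := by rw [hA, hB]; module
    have e2 : A - B = (2:ℂ) • T := by rw [hA, hB]; module
    rw [e1, e2, smul_smul]
    norm_num
    congr 1 <;> module
  -- positivity and square facts
  have hAA : 0 ≤ adjoint A ∘L A := by
    rw [(ContinuousLinearMap.nonneg_iff_isPositive _)]
    exact isPositive_adjoint_comp_self A
  have hBB : 0 ≤ adjoint B ∘L B := by
    rw [(ContinuousLinearMap.nonneg_iff_isPositive _)]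
    exact isPositive_adjoint_comp_self B
  have habsA : 0 ≤ absOp A := CFC.sqrt_nonneg _
  have habsB : 0 ≤ absOp B := CFC.sqrt_nonneg _
  have hsA : 0 ≤ sqrtAbs A := CFC.sqrt_nonneg _
  have hsB : 0 ≤ sqrtAbs B := CFC.sqrt_nonneg _
  have hsA2 : sqrtAbs A ∘L sqrtAbs A = absOp A := CFC.sqrt_mul_sqrt_self _ habsA
  have hsB2 : sqrtAbs B ∘L sqrtAbs B = absOp B := CFC.sqrt_mul_sqrt_self _ habsB
  have habsA2 : absOp A ∘L absOp A = A ∘L A := by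
    have h : absOp A ∘L absOp A = adjoint A ∘L A := CFC.sqrt_mul_sqrt_self _ hAA
    rw [h, hAsa.adjoint_eq]
  have habsB2 : absOp B ∘L absOp B = B ∘L B := by
    have h : absOp B ∘L absOp B = adjoint B ∘L B := CFC.sqrt_mul_sqrt_self _ hBB
    rw [h, hBsa.adjoint_eq]
  set Dh := blockOp (sqrtAbs A) 0 0 (sqrtAbs B) with hDh
  set D1 := blockOp (absOp A) 0 0 (absOp B) with hD1
  have hDhpos : (Dh).IsPositive :=
    blockOp_isPositive ((nonneg_iff_isPositive _).mp hsA) ((nonneg_iff_isPositive _).mp hsB)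
  have hD1pos : (D1).IsPositive :=
    blockOp_isPositive ((nonneg_iff_isPositive _).mp habsA) ((nonneg_iff_isPositive _).mp habsB)
  have hDh2 : Dh ∘L Dh = D1 := by
    rw [hDh, hD1, blockOp_comp]
    congr 1 <;> simp [hsA2, hsB2]
  have hD12 : D1 ∘L D1 = blockOp (A ∘L A) 0 0 (B ∘L B) := by
    rw [hD1, blockOp_comp]
    congr 1 <;> simp [habsA2, habsB2]
  set R := U ∘L Dh ∘L adjoint U with hR
  set E := U ∘L D1 ∘L adjoint U with hE
  have hRpos : 0 ≤ R := (nonneg_iff_isPositive _).mpr (hDhpos.conj_adjoint U)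
  have hEpos : 0 ≤ E := (nonneg_iff_isPositive _).mpr (hD1pos.conj_adjoint U)
  have hRR : R * R = E := by
    show R ∘L R = E
    rw [hR, hE]
    calc (U ∘L Dh ∘L adjoint U) ∘L (U ∘L Dh ∘L adjoint U)
        = U ∘L Dh ∘L ((adjoint U ∘L U) ∘L Dh ∘L adjoint U) := by
          simp only [ContinuousLinearMap.comp_assoc]
      _ = U ∘L (Dh ∘L Dh) ∘L adjoint U := by
          rw [hUaU]; simp only [ContinuousLinearMap.comp_assoc, one_def, id_comp]
      _ = U ∘L D1 ∘L adjoint U := by rw [hDh2]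
  have hEE : E * E = adjoint M ∘L M := by
    show E ∘L E = adjoint M ∘L M
    have hMsa : adjoint M = M := by
      rw [hM, blockOp_adjoint, hJsa.adjoint_eq, hT.adjoint_eq]
    rw [hMsa, hE]
    calc (U ∘L D1 ∘L adjoint U) ∘L (U ∘L D1 ∘L adjoint U)
        = U ∘L D1 ∘L ((adjoint U ∘L U) ∘L D1 ∘L adjoint U) := by
          simp only [ContinuousLinearMap.comp_assoc]
      _ = U ∘L (D1 ∘L D1) ∘L adjoint U := by
          rw [hUaU]; simp only [ContinuousLinearMap.comp_assoc, one_def, id_comp]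
      _ = M ∘L M := by
          rw [hD12, hM', hUadj]
          calc U ∘L blockOp (A ∘L A) 0 0 (B ∘L B) ∘L U
              = U ∘L (blockOp A 0 0 B ∘L blockOp A 0 0 B) ∘L U := by
                rw [blockOp_comp]; congr 2 <;> simp
            _ = (U ∘L blockOp A 0 0 B ∘L U) ∘L (U ∘L blockOp A 0 0 B ∘L U) := by
                conv_rhs => rw [ContinuousLinearMap.comp_assoc, ContinuousLinearMap.comp_assoc,
                  ← ContinuousLinearMap.comp_assoc U U, hUU]
                simp only [ContinuousLinearMap.comp_assoc, one_def, id_comp]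
  have habsM : absOp M = E := by
    rw [absOp]
    exact CFC.sqrt_unique hEE hEpos
  rw [sqrtAbs, habsM]
  exact CFC.sqrt_unique hRR hRpos


end
end

section
/- Let H be a complex Hilbert space, J a fundamental symmetry on H, and T a bounded operator on H with T* = J∘T∘J (i.e., T is selfadjoint in the Kreĭn space (H,J)). Define the defect operators D_T := |J − T*∘J∘T|^{1/2} and D_{T*} := |J − T∘J∘T*|^{1/2}. Then D_T = |I − T²|^{1/2}, D_{T*} = J∘D_T∘J, and consequently closure(ran D_{T*}) = J(closure(ran D_T)) and closure(ran D_T) = J(closure(ran D_{T*})). -/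
open ContinuousLinearMap

noncomputable section

set_option maxHeartbeats 1000000
set_option synthInstance.maxHeartbeats 400000

/-- Conjugation by a fundamental symmetry commutes with the positive square root. -/
lemma conj_sqrt {H : Type*} [NormedAddCommGroup H] [InnerProductSpace ℂ H] [CompleteSpace H]
    (J A : H →L[ℂ] H) (hJsa : IsSelfAdjoint J) (hJsq : J * J = 1) (hA : 0 ≤ A) :
    CFC.sqrt (J * A * J) = J * CFC.sqrt A * J := by
  have hb : (0 : H →L[ℂ] H) ≤ J * CFC.sqrt A * J := by
    have := star_left_conjugate_nonneg (CFC.sqrt_nonneg (a := A)) J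
    rwa [hJsa.star_eq] at this
  refine CFC.sqrt_unique ?_ hb
  have hc : ∀ x : H →L[ℂ] H, J * (J * x) = x := fun x => by
    rw [← mul_assoc, hJsq, one_mul]
  simp only [mul_assoc]
  rw [hc, ← mul_assoc (CFC.sqrt A), CFC.sqrt_mul_sqrt_self A hA]

theorem statement_10
    {H : Type*} [NormedAddCommGroup H] [InnerProductSpace ℂ H] [CompleteSpace H]
    (J : H →L[ℂ] H) (hJsa : IsSelfAdjoint J) (hJsq : J ∘L J = 1)
    (T : H →L[ℂ] H) (hT : adjoint T = J ∘L T ∘L J)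
    (DT : H →L[ℂ] H) (hDT : DT = sqrtAbs (J - adjoint T ∘L J ∘L T))
    (DTs : H →L[ℂ] H) (hDTs : DTs = sqrtAbs (J - T ∘L J ∘L adjoint T)) :
    DT = sqrtAbs (1 - T ∘L T) ∧
    DTs = J ∘L DT ∘L J ∧
    closure (Set.range ⇑DTs) = ⇑J '' closure (Set.range ⇑DT) ∧
    closure (Set.range ⇑DT) = ⇑J '' closure (Set.range ⇑DTs) := by
  have hJsq' : J * J = 1 := hJsq
  have hJJ : ∀ x, J (J x) = x := fun x => by
    have := congrArg (fun S => S x) hJsq; simpa using this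
  have hc : ∀ x : H →L[ℂ] H, J * (J * x) = x := fun x => by
    rw [← mul_assoc, hJsq', one_mul]
  -- the key algebraic identities
  have hB1 : J - adjoint T ∘L J ∘L T = J ∘L (1 - T ∘L T) := by
    rw [hT]; ext x
    simp [hJJ]
  have hB2 : J - T ∘L J ∘L adjoint T = (1 - T ∘L T) ∘L J := by
    rw [hT]; ext x
    simp [hJJ]
  set B : H →L[ℂ] H := 1 - T ∘L T with hB
  -- absOp (J * B) = absOp B
  have habs1 : absOp (J ∘L B) = absOp B := by
    unfold absOp
    congr 1
    rw [adjoint_comp J B, hJsa.adjoint_eq]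
    simp only [← mul_def, mul_assoc]
    rw [hc]
  have hDT' : DT = sqrtAbs B := by rw [hDT, hB1]; unfold sqrtAbs; rw [habs1]
  -- absOp (B * J) = J * absOp B * J
  have hnn : (0 : H →L[ℂ] H) ≤ adjoint B * B := by
    simpa only [star_eq_adjoint] using star_mul_self_nonneg B
  have habs2 : absOp (B ∘L J) = J ∘L absOp B ∘L J := by
    unfold absOp
    have h1 : adjoint (B ∘L J) ∘L (B ∘L J) = J * (adjoint B * B) * J := by
      rw [adjoint_comp B J, hJsa.adjoint_eq]
      simp only [← mul_def, mul_assoc]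
    rw [h1, conj_sqrt J _ hJsa hJsq' hnn]
    simp only [← mul_def, mul_assoc]
  have hDTs' : DTs = J ∘L DT ∘L J := by
    rw [hDTs, hB2, hDT']
    unfold sqrtAbs
    rw [habs2]
    have h2 : (J ∘L absOp B ∘L J : H →L[ℂ] H) = J * absOp B * J := by
      simp only [← mul_def, mul_assoc]
    have hnnB : (0 : H →L[ℂ] H) ≤ absOp B := by unfold absOp; exact CFC.sqrt_nonneg (a := adjoint B ∘L B)
    rw [h2, conj_sqrt J (absOp B) hJsa hJsq' hnnB]
    simp only [← mul_def, mul_assoc]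
  -- J as a homeomorphism
  let e : H ≃L[ℂ] H := ContinuousLinearEquiv.equivOfInverse J J hJJ hJJ
  have hrange : Set.range ⇑DTs = ⇑J '' Set.range ⇑DT := by
    rw [hDTs']
    ext y
    constructor
    · rintro ⟨x, rfl⟩
      exact ⟨DT (J x), ⟨J x, rfl⟩, rfl⟩
    · rintro ⟨z, ⟨x, rfl⟩, rfl⟩
      exact ⟨J x, by simp [hJJ]⟩
  have hcl : closure (Set.range ⇑DTs) = ⇑J '' closure (Set.range ⇑DT) := by
    rw [hrange]
    exact (e.toHomeomorph.image_closure _).symm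
  refine ⟨hDT', hDTs', hcl, ?_⟩
  have hid : (⇑J ∘ ⇑J) = _root_.id := funext hJJ
  rw [hcl, ← Set.image_comp, hid, Set.image_id]

end
end
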